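/- Let u ∈ S_n and μ := max{i : c_i(u) > 0}. Then there is an injection φ_u : PD(u) → Φ_μ that is weight-preserving, i.e., wt_u(φ_u(D)) = wt(D) for all pipe dreams D ∈ PD(u). -/

import Mathlib

open scoped Classical

/-- The Lehmer code of a permutation of `ℕ` (0-indexed):
`lehmerCode w i = #{j | j > i ∧ w j < w i}`. -/
noncomputable def lehmerCode (w : Equiv.Perm ℕ) (i : ℕ) : ℕ :=
  Set.ncard {j | i < j ∧ w j < w i}

/-- The number of inversions of a permutation of `ℕ`. -/
noncomputable def inversions (w : Equiv.Perm ℕ) : ℕ :=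
  Set.ncard {p : ℕ × ℕ | p.1 < p.2 ∧ w p.2 < w p.1}

/-- The word of a pipe-dream candidate `D ⊆ Δ_n` (0-indexed positions): read the rows
top to bottom and each row from right to left; a cross at `(i, j)` contributes the
letter `i + j` (this is the letter `i + j - 1` in 1-indexed conventions). -/
def pdWord (n : ℕ) (D : Finset (ℕ × ℕ)) : List ℕ :=
  ((List.range n).map fun i =>
    (((List.range n).reverse.filter fun j => decide ((i, j) ∈ D)).map
      fun j => i + j)).flatten

/-- The permutation traced out by the pipes of `D`: the product of the simple
transpositions given by the word of `D`. -/
def pdPerm (n : ℕ) (D : Finset (ℕ × ℕ)) : Equiv.Perm ℕ :=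
  ((pdWord n D).map fun k => Equiv.swap k (k + 1)).prod

/-- `D` is a (reduced) pipe dream for `u` inside the staircase
`Δ_n = {(i,j) : i + j + 1 ≤ n}` (0-indexed): the pipes trace out the permutation `u`
(the pipe entering the top of column `j` exits the left edge in row `i` with `u i = j`),
and no two pipes cross more than once, i.e. `#D = ℓ(u)`. -/
def IsPipeDream (n : ℕ) (u : Equiv.Perm ℕ) (D : Finset (ℕ × ℕ)) : Prop :=
  (∀ p ∈ D, p.1 + p.2 + 1 ≤ n) ∧ pdPerm n D = u ∧ D.card = inversions u

/-- The weight of a pipe dream: `wt D i` is the number of crosses in (0-indexed) row `i`. -/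
def wt (D : Finset (ℕ × ℕ)) (i : ℕ) : ℕ := (D.filter fun p => p.1 = i).card
/-- A ladder index is a pair `(i, [k_1, …, k_ℓ])`; the row `i` is 0-indexed here. -/
abbrev LIdx : Type := ℕ × List ℕ

/-- `|𝐢| = i + k_1 + ⋯ + k_ℓ`, 0-indexed (one less than the 1-indexed `|𝐢|`). -/
def lidxSz (a : LIdx) : ℕ := a.1 + a.2.sum

/-- Membership in the set `L_μ` of ladder indices, where `μ` is the 0-indexed largest
row with a nonzero code entry (so `μ = (paper's μ) - 1`): `ℓ ≥ 1`, all `k_p ≥ 1`, and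
`i + k_1 + ⋯ + k_ℓ ≤ μ` (0-indexed). -/
def memL (μ : ℕ) (a : LIdx) : Prop :=
  a.2 ≠ [] ∧ (∀ k ∈ a.2, 1 ≤ k) ∧ lidxSz a ≤ μ

/-- The (total) ladder order on ladder indices: `(i, ks) ≺ (i', ks')` iff `i > i'`, or
`i = i'` and `ks` is lexicographically smaller than `ks'` (with a proper prefix being
*larger* than the word it is a prefix of). -/
def lidxLt (a b : LIdx) : Prop :=
  b.1 < a.1 ∨ (a.1 = b.1 ∧
    ((∃ j, j < a.2.length ∧ j < b.2.length ∧ a.2.take j = b.2.take j ∧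
        a.2.getD j 0 < b.2.getD j 0) ∨
      (b.2 <+: a.2 ∧ a.2 ≠ b.2)))

/-- A ladder sequence in `Φ_μ`: an `ℕ`-valued vector indexed by `L_μ`
(realized as a function on all of `LIdx` vanishing off `L_μ`). -/
def memPhi (μ : ℕ) (x : LIdx → ℕ) : Prop :=
  ∀ a : LIdx, ¬ memL μ a → x a = 0

/-- The `u`-weight of a ladder sequence `x ∈ Φ_μ` (0-indexed in `j`):
`wt_u(x)_j = c_j(u) - Σ_{𝐢 ∈ L_μ, |𝐢| = j} x_𝐢 + Σ_{𝐢 ∈ L_μ, i = j} x_𝐢`. -/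
noncomputable def wtu (u : Equiv.Perm ℕ) (μ : ℕ) (x : LIdx → ℕ) (j : ℕ) : ℤ :=
  (lehmerCode u j : ℤ)
    - ∑ᶠ a ∈ {a : LIdx | memL μ a ∧ lidxSz a = j}, (x a : ℤ)
    + ∑ᶠ a ∈ {a : LIdx | memL μ a ∧ a.1 = j}, (x a : ℤ)

namespace PDAux

/-! ### Words of simple transpositions and inversion sets -/

/-- Product of the simple transpositions of a word. -/
def wprod (w : List ℕ) : Equiv.Perm ℕ := (w.map fun k => Equiv.swap k (k + 1)).prod

lemma wprod_nil : wprod [] = 1 := rfl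

lemma wprod_cons (b : ℕ) (w : List ℕ) :
    wprod (b :: w) = Equiv.swap b (b + 1) * wprod w := by
  simp [wprod]

lemma pdPerm_eq_wprod (n : ℕ) (D : Finset (ℕ × ℕ)) : pdPerm n D = wprod (pdWord n D) := rfl

/-- The set of inversions (as position pairs) of a permutation. -/
def invSet (u : Equiv.Perm ℕ) : Set (ℕ × ℕ) := {p | p.1 < p.2 ∧ u p.2 < u p.1}

lemma inversions_eq_ncard (u : Equiv.Perm ℕ) : inversions u = (invSet u).ncard := rfl

lemma invSet_one : invSet (1 : Equiv.Perm ℕ) = ∅ := by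
  ext ⟨x, y⟩
  simp only [invSet, Set.mem_setOf_eq, Equiv.Perm.coe_one, id_eq, Set.mem_empty_iff_false,
    iff_false, not_and]
  omega

lemma inversions_one : inversions (1 : Equiv.Perm ℕ) = 0 := by
  rw [inversions_eq_ncard, invSet_one, Set.ncard_empty]

lemma lehmerCode_one (j : ℕ) : lehmerCode (1 : Equiv.Perm ℕ) j = 0 := by
  have : {y | j < y ∧ (1 : Equiv.Perm ℕ) y < (1 : Equiv.Perm ℕ) j} = ∅ := by
    ext y
    simp only [Equiv.Perm.coe_one, id_eq, Set.mem_setOf_eq, Set.mem_empty_iff_false, iff_false,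
      not_and]
    omega
  rw [lehmerCode, this, Set.ncard_empty]

/-- Permutations fixing everything from `N` on. -/
def FixGE (N : ℕ) (u : Equiv.Perm ℕ) : Prop := ∀ x, N ≤ x → u x = x

lemma FixGE.mono {N M : ℕ} {u : Equiv.Perm ℕ} (h : FixGE N u) (hNM : N ≤ M) : FixGE M u :=
  fun x hx => h x (le_trans hNM hx)

lemma FixGE.apply_lt {N : ℕ} {u : Equiv.Perm ℕ} (h : FixGE N u) {x : ℕ} (hx : x < N) :
    u x < N := by
  by_contra hge
  push_neg at hge
  have h1 : u (u x) = u x := h _ hge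
  have h2 : u x = x := u.injective h1
  omega

lemma invSet_finite {N : ℕ} {u : Equiv.Perm ℕ} (h : FixGE N u) : (invSet u).Finite := by
  apply Set.Finite.subset (Set.finite_Iio N |>.prod (Set.finite_Iio N))
  rintro ⟨x, y⟩ ⟨hxy, hv⟩
  dsimp only at hxy hv
  by_cases hy : y < N
  · exact ⟨lt_trans hxy hy, hy⟩
  · exfalso
    push_neg at hy
    have huy : u y = y := h y hy
    by_cases hx : x < N
    · have := h.apply_lt hx
      omega
    · push_neg at hx
      have hux : u x = x := h x hx
      omega

/-- How a simple transposition interacts with the order. -/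
lemma swap_lt_iff (b p q : ℕ) :
    Equiv.swap b (b + 1) p < Equiv.swap b (b + 1) q ↔
      ((p < q ∧ ¬(p = b ∧ q = b + 1)) ∨ (p = b + 1 ∧ q = b)) := by
  rw [Equiv.swap_apply_def, Equiv.swap_apply_def]
  split_ifs <;> omega

lemma mem_invSet_mul {V : Equiv.Perm ℕ} {b x y : ℕ} :
    (x, y) ∈ invSet (Equiv.swap b (b + 1) * V) ↔
      x < y ∧ ((V y < V x ∧ ¬(V y = b ∧ V x = b + 1)) ∨ (V y = b + 1 ∧ V x = b)) := by
  simp only [invSet, Set.mem_setOf_eq, Equiv.Perm.mul_apply]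
  rw [swap_lt_iff]

theorem _root_.Equiv.Perm.apply_inv_self (f : Equiv.Perm ℕ) (x : ℕ) : f (f⁻¹ x) = x :=
  Equiv.apply_symm_apply f x

theorem _root_.Equiv.Perm.inv_apply_self (f : Equiv.Perm ℕ) (x : ℕ) : f⁻¹ (f x) = x :=
  Equiv.symm_apply_apply f x

lemma apply_eq_iff_inv {V : Equiv.Perm ℕ} {x b : ℕ} : V x = b ↔ x = V⁻¹ b := by
  constructor
  · intro h; rw [← h, Equiv.Perm.inv_apply_self]
  · intro h; rw [h, Equiv.Perm.apply_inv_self]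

lemma invSet_mul_pos {V : Equiv.Perm ℕ} {b : ℕ} (h : V⁻¹ b < V⁻¹ (b + 1)) :
    invSet (Equiv.swap b (b + 1) * V) = insert (V⁻¹ b, V⁻¹ (b + 1)) (invSet V) := by
  ext ⟨x, y⟩
  rw [mem_invSet_mul]
  simp only [Set.mem_insert_iff, Prod.mk.injEq]
  constructor
  · rintro ⟨hxy, ⟨h1, h2⟩ | ⟨h1, h2⟩⟩
    · exact Or.inr ⟨hxy, h1⟩
    · left
      rw [apply_eq_iff_inv] at h1 h2
      exact ⟨h2, h1⟩
  · rintro (⟨hx, hy⟩ | ⟨hxy, hV⟩)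
    · subst hx; subst hy
      refine ⟨h, Or.inr ⟨?_, ?_⟩⟩
      · exact Equiv.Perm.apply_inv_self V (b + 1)
      · exact Equiv.Perm.apply_inv_self V b
    · refine ⟨hxy, Or.inl ⟨hV, ?_⟩⟩
      rintro ⟨h1, h2⟩
      rw [apply_eq_iff_inv] at h1 h2
      omega
  
lemma invSet_mul_pos_not_mem {V : Equiv.Perm ℕ} {b : ℕ} :
    (V⁻¹ b, V⁻¹ (b + 1)) ∉ invSet V := by
  rintro ⟨-, hv⟩
  simp only [Equiv.Perm.apply_inv_self] at hv
  omega

lemma invSet_mul_neg {V : Equiv.Perm ℕ} {b : ℕ} (h : V⁻¹ (b + 1) < V⁻¹ b) :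
    invSet (Equiv.swap b (b + 1) * V) = invSet V \ {(V⁻¹ (b + 1), V⁻¹ b)} := by
  ext ⟨x, y⟩
  rw [mem_invSet_mul]
  simp only [Set.mem_diff, Set.mem_singleton_iff, Prod.mk.injEq, invSet, Set.mem_setOf_eq]
  constructor
  · rintro ⟨hxy, ⟨h1, h2⟩ | ⟨h1, h2⟩⟩
    · refine ⟨⟨hxy, h1⟩, ?_⟩
      rintro ⟨hx, hy⟩
      subst hx; subst hy
      exact h2 ⟨Equiv.Perm.apply_inv_self V b, Equiv.Perm.apply_inv_self V (b + 1)⟩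
    · exfalso
      rw [apply_eq_iff_inv] at h1 h2
      omega
  · rintro ⟨⟨hxy, hV⟩, hne⟩
    refine ⟨hxy, Or.inl ⟨hV, ?_⟩⟩
    rintro ⟨h1, h2⟩
    rw [apply_eq_iff_inv] at h1 h2
    exact hne ⟨h2, h1⟩

lemma invSet_mul_neg_mem {V : Equiv.Perm ℕ} {b : ℕ} (h : V⁻¹ (b + 1) < V⁻¹ b) :
    (V⁻¹ (b + 1), V⁻¹ b) ∈ invSet V :=
  ⟨h, by simp only [Equiv.Perm.apply_inv_self]; omega⟩

lemma inversions_mul_pos {V : Equiv.Perm ℕ} {b N : ℕ} (hN : FixGE N V)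
    (h : V⁻¹ b < V⁻¹ (b + 1)) :
    inversions (Equiv.swap b (b + 1) * V) = inversions V + 1 := by
  rw [inversions_eq_ncard, inversions_eq_ncard, invSet_mul_pos h,
    Set.ncard_insert_of_notMem invSet_mul_pos_not_mem (invSet_finite hN)]

lemma inversions_mul_neg {V : Equiv.Perm ℕ} {b N : ℕ} (hN : FixGE N V)
    (h : V⁻¹ (b + 1) < V⁻¹ b) :
    inversions (Equiv.swap b (b + 1) * V) + 1 = inversions V := by
  rw [inversions_eq_ncard, inversions_eq_ncard, invSet_mul_neg h,
    Set.ncard_diff_singleton_add_one (invSet_mul_neg_mem h) (invSet_finite hN)]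

lemma lehmerCode_eq_ncard (u : Equiv.Perm ℕ) (j : ℕ) :
    lehmerCode u j = (invSet u ∩ {p | p.1 = j}).ncard := by
  rw [lehmerCode]
  rw [← Set.ncard_image_of_injective {y | j < y ∧ u y < u j}
    (f := fun y => ((j, y) : ℕ × ℕ)) (fun a b h => by simpa using h)]
  congr 1
  ext ⟨x, y⟩
  simp only [Set.mem_image, Set.mem_setOf_eq, Prod.mk.injEq, Set.mem_inter_iff, invSet]
  constructor
  · rintro ⟨y', ⟨h1, h2⟩, h3, h4⟩
    subst h3; subst h4
    exact ⟨⟨h1, h2⟩, rfl⟩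
  · rintro ⟨⟨h1, h2⟩, h3⟩
    exact ⟨y, by simp_all⟩

lemma lehmerCode_mul_pos {V : Equiv.Perm ℕ} {b N : ℕ} (hN : FixGE N V)
    (h : V⁻¹ b < V⁻¹ (b + 1)) (j : ℕ) :
    lehmerCode (Equiv.swap b (b + 1) * V) j
      = lehmerCode V j + (if j = V⁻¹ b then 1 else 0) := by
  rw [lehmerCode_eq_ncard, lehmerCode_eq_ncard, invSet_mul_pos h]
  by_cases hj : j = V⁻¹ b
  · subst hj
    rw [if_pos rfl]
    rw [Set.insert_inter_of_mem (by simp)]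
    rw [Set.ncard_insert_of_notMem (fun hmem => invSet_mul_pos_not_mem hmem.1)
      ((invSet_finite hN).subset Set.inter_subset_left)]
  · rw [if_neg hj, Set.insert_inter_of_notMem (by simpa using fun h' => hj h'.symm), Nat.add_zero]

end PDAux
namespace PDAux

/-! ### Bounds on words, reducedness -/

/-- A bound above all points moved by the word's product. -/
def wbound (w : List ℕ) : ℕ := (w.map (· + 2)).foldr max 0

lemma wbound_cons (b : ℕ) (w : List ℕ) : wbound (b :: w) = max (b + 2) (wbound w) := rfl

lemma wprod_fixGE (w : List ℕ) : FixGE (wbound w) (wprod w) := by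
  induction w with
  | nil => intro x _; rfl
  | cons b w ih =>
    intro x hx
    rw [wbound_cons] at hx
    rw [wprod_cons, Equiv.Perm.mul_apply, ih x (by omega)]
    apply Equiv.swap_apply_of_ne_of_ne <;> omega

/-- `Reduced w` : the word `w` is a reduced word for its product. -/
def Reduced (w : List ℕ) : Prop := inversions (wprod w) = w.length

lemma reduced_nil : Reduced [] := by
  rw [Reduced, wprod_nil, inversions_one]; rfl

lemma inversions_wprod_le (w : List ℕ) : inversions (wprod w) ≤ w.length := by
  induction w with
  | nil => rw [wprod_nil, inversions_one]; exact Nat.zero_le _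
  | cons b w ih =>
    rw [wprod_cons]
    rcases lt_trichotomy ((wprod w)⁻¹ b) ((wprod w)⁻¹ (b + 1)) with h | h | h
    · rw [inversions_mul_pos (wprod_fixGE w) h]
      simpa using ih
    · exact absurd ((wprod w)⁻¹.injective h) (by omega)
    · have h2 := inversions_mul_neg (wprod_fixGE w) h
      simp only [List.length_cons]
      omega

lemma reduced_cons {b : ℕ} {w : List ℕ} (h : Reduced (b :: w)) :
    Reduced w ∧ (wprod w)⁻¹ b < (wprod w)⁻¹ (b + 1) := by
  rw [Reduced, wprod_cons, List.length_cons] at h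
  have hle := inversions_wprod_le w
  rcases lt_trichotomy ((wprod w)⁻¹ b) ((wprod w)⁻¹ (b + 1)) with hlt | heq | hgt
  · rw [inversions_mul_pos (wprod_fixGE w) hlt] at h
    exact ⟨by rw [Reduced]; omega, hlt⟩
  · exact absurd ((wprod w)⁻¹.injective heq) (by omega)
  · have h2 := inversions_mul_neg (wprod_fixGE w) hgt
    omega

/-! ### The origin list -/

/-- For each letter of an annotated word (row, letter), the pair (row, origin):
the origin is the position, in the final permutation, of the smaller leg of the
inversion created by this letter. -/
def olist : List (ℕ × ℕ) → List (ℕ × ℕ)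
  | [] => []
  | p :: A => (p.1, (wprod (A.map Prod.snd))⁻¹ p.2) :: olist A

lemma olist_map_fst (A : List (ℕ × ℕ)) : (olist A).map Prod.fst = A.map Prod.fst := by
  induction A with
  | nil => rfl
  | cons p A ih => simp [olist, ih]

lemma countP_snd_olist (A : List (ℕ × ℕ)) (h : Reduced (A.map Prod.snd)) (s : ℕ) :
    (olist A).countP (fun p => decide (p.2 = s))
      = lehmerCode (wprod (A.map Prod.snd)) s := by
  induction A with
  | nil => simp [olist, wprod_nil, lehmerCode_one]
  | cons p A ih =>
    obtain ⟨hred, hlt⟩ := reduced_cons (by simpa using h)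
    rw [List.map_cons, wprod_cons, lehmerCode_mul_pos (wprod_fixGE _) hlt s]
    rw [olist, List.countP_cons, ih hred]
    by_cases hs : s = (wprod (A.map Prod.snd))⁻¹ p.2
    · simp [hs]
    · have hs' : ¬ s = (Equiv.symm (wprod (A.map Prod.snd))) p.2 := hs
      simp [hs', Ne.symm hs']

/-! ### Origins are at least the rows -/

lemma wprod_fix_lt {w : List ℕ} {r : ℕ} (h : ∀ c ∈ w, r ≤ c) {x : ℕ} (hx : x < r) :
    wprod w x = x := by
  induction w with
  | nil => rfl
  | cons b w ih =>
    have hb : r ≤ b := h b (List.mem_cons_self)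
    rw [wprod_cons, Equiv.Perm.mul_apply, ih (fun c hc => h c (List.mem_cons_of_mem _ hc))]
    apply Equiv.swap_apply_of_ne_of_ne <;> omega

lemma wprod_inv_ge {w : List ℕ} {r b : ℕ} (h : ∀ c ∈ w, r ≤ c) (hb : r ≤ b) :
    r ≤ (wprod w)⁻¹ b := by
  by_contra hlt
  push_neg at hlt
  have h1 : wprod w ((wprod w)⁻¹ b) = (wprod w)⁻¹ b := wprod_fix_lt h hlt
  rw [Equiv.Perm.apply_inv_self] at h1
  omega

/-- The order in which crosses are read: increasing rows, decreasing letters in a row. -/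
def Rel (p q : ℕ × ℕ) : Prop := p.1 < q.1 ∨ (p.1 = q.1 ∧ q.2 < p.2)

lemma olist_fst_le_snd {A : List (ℕ × ℕ)} (hA : A.Pairwise Rel)
    (hb : ∀ p ∈ A, p.1 ≤ p.2) : ∀ q ∈ olist A, q.1 ≤ q.2 := by
  induction A with
  | nil => intro q hq; simp [olist] at hq
  | cons p A ih =>
    intro q hq
    rw [olist, List.mem_cons] at hq
    rcases hq with hq | hq
    · subst hq
      dsimp only
      apply wprod_inv_ge (r := p.1)
      · intro c hc
        rw [List.mem_map] at hc
        obtain ⟨p', hp', rfl⟩ := hc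
        have h1 : Rel p p' := (List.pairwise_cons.mp hA).1 p' hp'
        have h2 : p'.1 ≤ p'.2 := hb p' (List.mem_cons_of_mem _ hp')
        rw [Rel] at h1
        omega
      · exact hb p (List.mem_cons_self)
    · exact ih (List.pairwise_cons.mp hA).2 (fun p' hp' => hb p' (List.mem_cons_of_mem _ hp')) q hq

/-! ### The maximal `u`-value of origins in the top row -/

lemma swap_apply_le {b x : ℕ} (hx : x ≤ b) : Equiv.swap b (b + 1) x ≤ b + 1 := by
  rw [Equiv.swap_apply_def]
  split_ifs <;> omega

lemma maxbound : ∀ (A' : List (ℕ × ℕ)) (i₀ b₀ : ℕ),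
    (((i₀, b₀) :: A').Pairwise Rel) →
    ∀ q ∈ olist ((i₀, b₀) :: A'), q.1 = i₀ →
      wprod (((i₀, b₀) :: A').map Prod.snd) q.2 ≤ b₀ + 1 := by
  intro A'
  induction A' with
  | nil =>
    intro i₀ b₀ _ q hq hq1
    rw [olist, olist] at hq
    simp only [List.mem_singleton] at hq
    subst hq
    simp only [List.map_cons, List.map_nil, wprod_cons, wprod_nil, mul_one, inv_one,
      Equiv.Perm.coe_one, id_eq, Equiv.swap_apply_left, le_refl]
  | cons p A'' ih =>
    intro i₀ b₀ hPW q hq hq1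
    rw [olist, List.mem_cons] at hq
    set V := wprod ((p :: A'').map Prod.snd) with hV
    rcases hq with hq | hq
    · subst hq
      dsimp only
      rw [List.map_cons, wprod_cons, Equiv.Perm.mul_apply, Equiv.Perm.apply_inv_self,
        Equiv.swap_apply_left]
    · -- q is an origin from the tail
      have hrel : Rel (i₀, b₀) p := (List.pairwise_cons.mp hPW).1 p (List.mem_cons_self)
      rw [Rel] at hrel
      dsimp only at hrel
      rcases hrel with h1 | ⟨h1, h2⟩
      · -- all rows in the tail are > i₀, contradiction with q.1 = i₀
        exfalso
        have : q.1 ∈ (olist (p :: A'')).map Prod.fst := List.mem_map_of_mem hq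
        rw [olist_map_fst] at this
        rw [List.mem_map] at this
        obtain ⟨p', hp', hfst⟩ := this
        have hPW' : (p :: A'').Pairwise Rel := (List.pairwise_cons.mp hPW).2
        rcases List.mem_cons.mp hp' with rfl | hp'
        · omega
        · have := (List.pairwise_cons.mp hPW').1 p' hp'
          rw [Rel] at this
          omega
      · -- p = (i₀, b₁) with b₁ < b₀
        obtain ⟨pi, pb⟩ := p
        dsimp only at h1 h2
        subst h1
        have hV' := ih i₀ pb (List.pairwise_cons.mp hPW).2 q hq hq1
        rw [List.map_cons, wprod_cons, Equiv.Perm.mul_apply]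
        exact swap_apply_le (le_trans hV' (by omega))

end PDAux
namespace PDAux

lemma olist_length (A : List (ℕ × ℕ)) : (olist A).length = A.length := by
  induction A with
  | nil => rfl
  | cons p A ih => simp [olist, ih]

/-- The multiset of (row, origin) pairs determines an admissible reduced annotated word. -/
theorem word_inj : ∀ (A B : List (ℕ × ℕ)),
    A.Pairwise Rel → B.Pairwise Rel →
    Reduced (A.map Prod.snd) → Reduced (B.map Prod.snd) →
    wprod (A.map Prod.snd) = wprod (B.map Prod.snd) →
    (↑(olist A) : Multiset (ℕ × ℕ)) = ↑(olist B) → A = B := by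
  intro A
  induction A with
  | nil =>
    intro B _ _ _ hredB hprod _
    rw [Reduced, ← hprod, List.map_nil, wprod_nil, inversions_one, List.length_map] at hredB
    exact (List.eq_nil_of_length_eq_zero hredB.symm).symm
  | cons p A' ih =>
    intro B hPWA hPWB hredA hredB hprod holist
    obtain ⟨i₀, b₀⟩ := p
    match B, hPWB, hredB with
    | [], _, _ =>
      exfalso
      rw [Reduced, hprod, List.map_nil, wprod_nil, inversions_one, List.map_cons,
        List.length_cons] at hredA
      omega
    | (i₁, b₁) :: B', hPWB, hredB =>
      -- the first rows agree: both are the minimum of the multiset of rows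
      have hminA : ∀ q ∈ olist ((i₀, b₀) :: A'), i₀ ≤ q.1 := by
        intro q hq
        have : q.1 ∈ (olist ((i₀, b₀) :: A')).map Prod.fst := List.mem_map_of_mem hq
        rw [olist_map_fst, List.mem_map] at this
        obtain ⟨p', hp', hfst⟩ := this
        rcases List.mem_cons.mp hp' with rfl | hp'
        · omega
        · have := (List.pairwise_cons.mp hPWA).1 p' hp'
          rw [Rel] at this
          omega
      have hminB : ∀ q ∈ olist ((i₁, b₁) :: B'), i₁ ≤ q.1 := by
        intro q hq
        have : q.1 ∈ (olist ((i₁, b₁) :: B')).map Prod.fst := List.mem_map_of_mem hq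
        rw [olist_map_fst, List.mem_map] at this
        obtain ⟨p', hp', hfst⟩ := this
        rcases List.mem_cons.mp hp' with rfl | hp'
        · omega
        · have := (List.pairwise_cons.mp hPWB).1 p' hp'
          rw [Rel] at this
          omega
      have hheadA : (i₀, (wprod (A'.map Prod.snd))⁻¹ b₀) ∈ olist ((i₀, b₀) :: A') := by
        rw [olist]; exact List.mem_cons_self
      have hheadB : (i₁, (wprod (B'.map Prod.snd))⁻¹ b₁) ∈ olist ((i₁, b₁) :: B') := by
        rw [olist]; exact List.mem_cons_self
      have hmemAB : ∀ q ∈ olist ((i₀, b₀) :: A'), q ∈ olist ((i₁, b₁) :: B') := by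
        intro q hq
        have : q ∈ (↑(olist ((i₀, b₀) :: A')) : Multiset (ℕ × ℕ)) := by simpa using hq
        rw [holist] at this
        simpa using this
      have hmemBA : ∀ q ∈ olist ((i₁, b₁) :: B'), q ∈ olist ((i₀, b₀) :: A') := by
        intro q hq
        have : q ∈ (↑(olist ((i₁, b₁) :: B')) : Multiset (ℕ × ℕ)) := by simpa using hq
        rw [← holist] at this
        simpa using this
      have hi : i₀ = i₁ := by
        have h1 : i₁ ≤ i₀ := by
          have := hminB _ (hmemAB _ hheadA)
          simpa using this
        have h2 : i₀ ≤ i₁ := by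
          have := hminA _ (hmemBA _ hheadB)
          simpa using this
        omega
      subst hi
      -- the first letters agree
      set u := wprod (((i₀, b₀) :: A').map Prod.snd) with hu
      have hub₀ : u ((wprod (A'.map Prod.snd))⁻¹ b₀) = b₀ + 1 := by
        rw [hu, List.map_cons, wprod_cons, Equiv.Perm.mul_apply, Equiv.Perm.apply_inv_self,
          Equiv.swap_apply_left]
      have hub₁ : u ((wprod (B'.map Prod.snd))⁻¹ b₁) = b₁ + 1 := by
        rw [hprod, List.map_cons, wprod_cons, Equiv.Perm.mul_apply,
          Equiv.Perm.apply_inv_self, Equiv.swap_apply_left]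
      have hb : b₀ = b₁ := by
        have h1 : b₀ + 1 ≤ b₁ + 1 := by
          have hmax := maxbound B' i₀ b₁ hPWB _ (hmemAB _ hheadA) rfl
          rw [← hprod, hub₀] at hmax
          exact hmax
        have h2 : b₁ + 1 ≤ b₀ + 1 := by
          have hmax := maxbound A' i₀ b₀ hPWA _ (hmemBA _ hheadB) rfl
          rw [← hu, hub₁] at hmax
          exact hmax
        omega
      subst hb
      -- the tails have the same product
      have hVeq : wprod (A'.map Prod.snd) = wprod (B'.map Prod.snd) := by
        have h1 : Equiv.swap b₀ (b₀ + 1) * wprod (A'.map Prod.snd)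
            = Equiv.swap b₀ (b₀ + 1) * wprod (B'.map Prod.snd) := by
          have h2 := hprod
          rw [hu, List.map_cons, List.map_cons, wprod_cons, wprod_cons] at h2
          exact h2
        exact mul_left_cancel h1
      -- cancel the equal heads of the origin multisets
      have holist' : (↑(olist A') : Multiset (ℕ × ℕ)) = ↑(olist B') := by
        have : olist ((i₀, b₀) :: A') = (i₀, (wprod (A'.map Prod.snd))⁻¹ b₀) :: olist A' := rfl
        rw [this] at holist
        have h2 : olist ((i₀, b₀) :: B') = (i₀, (wprod (B'.map Prod.snd))⁻¹ b₀) :: olist B' := rfl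
        rw [h2, ← hVeq] at holist
        rw [← Multiset.cons_coe, ← Multiset.cons_coe] at holist
        exact (Multiset.cons_inj_right _).mp holist
      have := ih B' (List.pairwise_cons.mp hPWA).2 (List.pairwise_cons.mp hPWB).2
        (reduced_cons (by simpa using hredA)).1 (reduced_cons (by simpa using hredB)).1
        hVeq holist'
      rw [this]

end PDAux
namespace PDAux

/-! ### The annotated word of a pipe-dream candidate -/

/-- The annotated word: each letter of `pdWord` together with its row. -/
def aword (n : ℕ) (D : Finset (ℕ × ℕ)) : List (ℕ × ℕ) :=
  ((List.range n).map fun i =>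
    (((List.range n).reverse.filter fun j => decide ((i, j) ∈ D)).map
      fun j => (i, i + j))).flatten

lemma aword_map_snd (n : ℕ) (D : Finset (ℕ × ℕ)) :
    (aword n D).map Prod.snd = pdWord n D := by
  rw [aword, pdWord, List.map_flatten, List.map_map]
  congr 1
  apply List.map_congr_left
  intro i _
  simp [List.map_map, Function.comp_def]

lemma aword_pairwise (n : ℕ) (D : Finset (ℕ × ℕ)) : (aword n D).Pairwise Rel := by
  rw [aword, List.pairwise_flatten]
  constructor
  · intro l hl
    rw [List.mem_map] at hl
    obtain ⟨i, _, rfl⟩ := hl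
    rw [List.pairwise_map]
    have h1 : ((List.range n).reverse).Pairwise (fun a b => b < a) := by
      rw [List.pairwise_reverse]
      exact List.pairwise_lt_range
    have h2 : (((List.range n).reverse.filter fun j => decide ((i, j) ∈ D))).Pairwise
        (fun a b => b < a) := h1.sublist (List.filter_sublist)
    exact h2.imp (fun {a b} hab => Or.inr ⟨rfl, by omega⟩)
  · rw [List.pairwise_map]
    have h1 := List.pairwise_lt_range (n := n)
    refine h1.imp ?_
    intro i1 i2 h12 x hx y hy
    rw [List.mem_map] at hx hy
    obtain ⟨j1, -, rfl⟩ := hx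
    obtain ⟨j2, -, rfl⟩ := hy
    exact Or.inl h12

lemma aword_fst_le_snd (n : ℕ) (D : Finset (ℕ × ℕ)) : ∀ p ∈ aword n D, p.1 ≤ p.2 := by
  intro p hp
  rw [aword, List.mem_flatten] at hp
  obtain ⟨l, hl, hmem⟩ := hp
  rw [List.mem_map] at hl
  obtain ⟨i, -, rfl⟩ := hl
  rw [List.mem_map] at hmem
  obtain ⟨j, -, rfl⟩ := hmem
  exact Nat.le_add_right _ _

lemma mem_aword {n : ℕ} {D : Finset (ℕ × ℕ)} (hD : ∀ p ∈ D, p.1 + p.2 + 1 ≤ n)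
    {i j : ℕ} : (i, i + j) ∈ aword n D ↔ (i, j) ∈ D := by
  rw [aword, List.mem_flatten]
  constructor
  · rintro ⟨l, hl, hmem⟩
    rw [List.mem_map] at hl
    obtain ⟨i', -, rfl⟩ := hl
    rw [List.mem_map] at hmem
    obtain ⟨j', hj', heq⟩ := hmem
    rw [Prod.mk.injEq] at heq
    obtain ⟨h1, h2⟩ := heq
    rw [List.mem_filter] at hj'
    have h3 : (i', j') ∈ D := of_decide_eq_true hj'.2
    have h4 : j' = j := by omega
    rw [← h1, ← h4]
    exact h3
  · intro hmem
    have hin : i + j + 1 ≤ n := hD _ hmem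
    refine ⟨((List.range n).reverse.filter fun j' => decide ((i, j') ∈ D)).map
      fun j' => (i, i + j'), ?_, ?_⟩
    · rw [List.mem_map]
      exact ⟨i, List.mem_range.mpr (by omega), rfl⟩
    · rw [List.mem_map]
      refine ⟨j, ?_, rfl⟩
      rw [List.mem_filter, List.mem_reverse, List.mem_range]
      exact ⟨by omega, decide_eq_true hmem⟩

lemma list_filter_length_eq_card (m : ℕ) (q : ℕ → Bool) :
    ((List.range m).filter q).length = ((Finset.range m).filter (fun j => q j = true)).card := by
  induction m with
  | zero => rfl
  | succ m ih =>
    rw [List.range_succ, List.filter_append, List.length_append, ih, Finset.range_add_one,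
      Finset.filter_insert]
    by_cases hQ : q m = true
    · rw [if_pos hQ, Finset.card_insert_of_notMem (by simp), List.filter_cons,
        if_pos hQ]
      simp [Nat.add_comm]
    · rw [if_neg hQ, List.filter_cons, if_neg (by simpa using hQ)]
      simp

lemma row_length_eq {n : ℕ} {D : Finset (ℕ × ℕ)} (hD : ∀ p ∈ D, p.1 + p.2 + 1 ≤ n) (i : ℕ) :
    ((List.range n).reverse.filter fun j => decide ((i, j) ∈ D)).length
      = (D.filter fun p => p.1 = i).card := by
  rw [List.filter_reverse, List.length_reverse,
    list_filter_length_eq_card n (fun j => decide ((i, j) ∈ D))]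
  have hconv : (Finset.range n).filter (fun j => decide ((i, j) ∈ D) = true)
      = (Finset.range n).filter (fun j => (i, j) ∈ D) := by
    apply Finset.filter_congr
    intro j _
    simp
  rw [hconv]
  rw [← Finset.card_image_of_injective ((Finset.range n).filter fun j => (i, j) ∈ D)
    (f := fun j => ((i, j) : ℕ × ℕ)) (fun a b h => by simpa using h)]
  congr 1
  ext ⟨a, b⟩
  simp only [Finset.mem_image, Finset.mem_filter, Finset.mem_range, Prod.mk.injEq]
  constructor
  · rintro ⟨j, ⟨-, hj⟩, rfl, rfl⟩
    exact ⟨hj, rfl⟩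
  · rintro ⟨hab, rfl⟩
    exact ⟨b, ⟨by have := hD _ hab; omega, hab⟩, rfl, rfl⟩

lemma list_map_sum_range (f : ℕ → ℕ) (n : ℕ) :
    ((List.range n).map f).sum = ∑ i ∈ Finset.range n, f i := by
  induction n with
  | zero => rfl
  | succ n ih =>
    rw [List.range_succ, List.map_append, List.sum_append, ih, Finset.sum_range_succ]
    simp

lemma length_aword {n : ℕ} {D : Finset (ℕ × ℕ)} (hD : ∀ p ∈ D, p.1 + p.2 + 1 ≤ n) :
    (aword n D).length = D.card := by
  rw [aword, List.length_flatten, List.map_map]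
  have h1 : (List.length ∘ fun i =>
      (((List.range n).reverse.filter fun j => decide ((i, j) ∈ D)).map fun j => (i, i + j)))
      = fun i => (D.filter fun p => p.1 = i).card := by
    funext i
    simp only [Function.comp_apply, List.length_map]
    exact row_length_eq hD i
  rw [h1, list_map_sum_range]
  exact (Finset.card_eq_sum_card_fiberwise (f := Prod.fst) (t := Finset.range n)
    (fun p hp => Finset.mem_range.mpr (by have := hD _ hp; omega))).symm

lemma countP_fst_aword {n : ℕ} {D : Finset (ℕ × ℕ)} (hD : ∀ p ∈ D, p.1 + p.2 + 1 ≤ n) (j : ℕ) :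
    (aword n D).countP (fun p => decide (p.1 = j)) = wt D j := by
  rw [aword, List.countP_flatten, List.map_map]
  have h1 : (List.countP (fun p => decide (p.1 = j)) ∘ fun i =>
      (((List.range n).reverse.filter fun j' => decide ((i, j') ∈ D)).map fun j' => (i, i + j')))
      = fun i => if i = j then (D.filter fun p => p.1 = i).card else 0 := by
    funext i
    simp only [Function.comp_apply, List.countP_map]
    by_cases hij : i = j
    · subst hij
      have hc : ((fun p => decide ((p : ℕ × ℕ).1 = i)) ∘ fun j' => (i, i + j'))
          = fun _ => true := by funext j'; simp
      rw [if_pos rfl, hc, List.countP_true]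
      exact row_length_eq hD i
    · have hc : ((fun p => decide ((p : ℕ × ℕ).1 = j)) ∘ fun j' => (i, i + j'))
          = fun _ => false := by funext j'; simp [hij]
      rw [if_neg hij, hc, List.countP_false]
      rfl
  rw [h1, list_map_sum_range]
  rw [Finset.sum_ite_eq' (Finset.range n) j (fun i => (D.filter fun p => p.1 = i).card)]
  by_cases hj : j < n
  · rw [if_pos (Finset.mem_range.mpr hj)]; rfl
  · rw [if_neg (by simpa using hj), wt]
    symm
    rw [Finset.card_eq_zero, Finset.filter_eq_empty_iff]
    intro p hp
    have := hD _ hp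
    omega

end PDAux
namespace PDAux

/-! ### The multiset of (row, origin) pairs and the ladder sequence of a pipe dream -/

/-- The multiset of (row, origin) pairs of a pipe-dream candidate. -/
def mOf (n : ℕ) (D : Finset (ℕ × ℕ)) : Multiset (ℕ × ℕ) := ↑(olist (aword n D))

/-- The ladder sequence associated to a pipe dream: `x_(i,[k])` is the number of
crosses in row `i` whose origin is row `i + k`. -/
noncomputable def phiMap (n μ : ℕ) (D : Finset (ℕ × ℕ)) : LIdx → ℕ := fun a =>
  match a with
  | (i, [k]) => if 1 ≤ k ∧ i + k ≤ μ then (mOf n D).count (i, i + k) else 0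
  | _ => 0

lemma memL_single {μ i k : ℕ} : memL μ (i, [k]) ↔ 1 ≤ k ∧ i + k ≤ μ := by
  rw [memL]
  simp [lidxSz]

lemma phi_memPhi (n μ : ℕ) (D : Finset (ℕ × ℕ)) : memPhi μ (phiMap n μ D) := by
  rintro ⟨i, ks⟩ ha
  match ks with
  | [] => rfl
  | [k] =>
    have h1 : ¬(1 ≤ k ∧ i + k ≤ μ) := fun hc => ha (memL_single.mpr hc)
    exact if_neg h1
  | k :: k' :: t => rfl

lemma phi_single (n μ D i k) :
    phiMap n μ D (i, [k]) = if 1 ≤ k ∧ i + k ≤ μ then (mOf n D).count (i, i + k) else 0 := rfl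

lemma phi_shape {n μ : ℕ} {D : Finset (ℕ × ℕ)} {a : LIdx} (h : phiMap n μ D a ≠ 0) :
    ∃ i k, a = (i, [k]) ∧ 1 ≤ k ∧ i + k ≤ μ := by
  obtain ⟨i, ks⟩ := a
  match ks with
  | [] => exact absurd rfl h
  | [k] =>
    by_cases hc : 1 ≤ k ∧ i + k ≤ μ
    · exact ⟨i, k, rfl, hc⟩
    · rw [phi_single, if_neg hc] at h
      exact absurd rfl h
  | k :: k' :: t => exact absurd rfl h

/-! ### Counting facts for pipe dreams -/

lemma reduced_of_pd {n : ℕ} {u : Equiv.Perm ℕ} {D : Finset (ℕ × ℕ)}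
    (hPD : IsPipeDream n u D) : Reduced ((aword n D).map Prod.snd) := by
  have hlen : (pdWord n D).length = D.card := by
    rw [← aword_map_snd, List.length_map, length_aword hPD.1]
  rw [Reduced, aword_map_snd, ← pdPerm_eq_wprod, hPD.2.1, hlen, hPD.2.2]

lemma wprod_of_pd {n : ℕ} {u : Equiv.Perm ℕ} {D : Finset (ℕ × ℕ)}
    (hPD : IsPipeDream n u D) : wprod ((aword n D).map Prod.snd) = u := by
  rw [aword_map_snd, ← pdPerm_eq_wprod, hPD.2.1]

lemma countP_snd_of_pd {n : ℕ} {u : Equiv.Perm ℕ} {D : Finset (ℕ × ℕ)}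
    (hPD : IsPipeDream n u D) (s : ℕ) :
    (mOf n D).countP (fun p => p.2 = s) = lehmerCode u s := by
  have h1 := countP_snd_olist (aword n D) (reduced_of_pd hPD) s
  rw [wprod_of_pd hPD] at h1
  rw [mOf, Multiset.coe_countP]
  exact h1

lemma countP_fst_olist (A : List (ℕ × ℕ)) (j : ℕ) :
    (olist A).countP (fun p => decide (p.1 = j)) = A.countP (fun p => decide (p.1 = j)) := by
  have h1 : ∀ L : List (ℕ × ℕ), L.countP (fun p => decide (p.1 = j))
      = (L.map Prod.fst).countP (fun x => decide (x = j)) := by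
    intro L
    rw [List.countP_map]
    rfl
  rw [h1, h1, olist_map_fst]

lemma countP_fst_of_pd {n : ℕ} {u : Equiv.Perm ℕ} {D : Finset (ℕ × ℕ)}
    (hPD : IsPipeDream n u D) (j : ℕ) :
    (mOf n D).countP (fun p => p.1 = j) = wt D j := by
  rw [mOf, Multiset.coe_countP]
  rw [show ((fun p => decide ((p : ℕ × ℕ).1 = j))) = (fun p => decide ((p : ℕ × ℕ).1 = j)) from rfl]
  rw [countP_fst_olist (aword n D) j]
  exact countP_fst_aword hPD.1 j

lemma fst_le_snd_mOf (n : ℕ) (D : Finset (ℕ × ℕ)) : ∀ p ∈ mOf n D, p.1 ≤ p.2 := by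
  intro p hp
  rw [mOf, Multiset.mem_coe] at hp
  exact olist_fst_le_snd (aword_pairwise n D) (aword_fst_le_snd n D) p hp

lemma lehmerCode_zero_of_ge {n : ℕ} {u : Equiv.Perm ℕ} (hu : ∀ i, n ≤ i → u i = i)
    {i : ℕ} (hi : n ≤ i) : lehmerCode u i = 0 := by
  have h1 : {y | i < y ∧ u y < u i} = ∅ := by
    ext y
    simp only [Set.mem_setOf_eq, Set.mem_empty_iff_false, iff_false, not_and, not_lt]
    intro hy
    rw [hu i hi, hu y (by omega)]
    omega
  rw [lehmerCode, h1, Set.ncard_empty]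

lemma bddAbove_code {n : ℕ} {u : Equiv.Perm ℕ} (hu : ∀ i, n ≤ i → u i = i) :
    BddAbove {i | 0 < lehmerCode u i} := by
  refine ⟨n, fun x hx => ?_⟩
  by_contra hgt
  push_neg at hgt
  have := lehmerCode_zero_of_ge hu (le_of_lt hgt)
  simp only [Set.mem_setOf_eq] at hx
  omega

lemma code_le_mu {n : ℕ} {u : Equiv.Perm ℕ} {μ : ℕ} (hu : ∀ i, n ≤ i → u i = i)
    (hμ : μ = sSup {i | 0 < lehmerCode u i}) {j : ℕ} (hj : 0 < lehmerCode u j) : j ≤ μ := by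
  rw [hμ]
  exact le_csSup (bddAbove_code hu) hj

lemma snd_le_mu_mOf {n : ℕ} {u : Equiv.Perm ℕ} {D : Finset (ℕ × ℕ)} {μ : ℕ}
    (hPD : IsPipeDream n u D) (hu : ∀ i, n ≤ i → u i = i)
    (hμ : μ = sSup {i | 0 < lehmerCode u i}) : ∀ p ∈ mOf n D, p.2 ≤ μ := by
  intro p hp
  have h1 : 0 < (mOf n D).countP (fun q => q.2 = p.2) :=
    Multiset.countP_pos.mpr ⟨p, hp, rfl⟩
  rw [countP_snd_of_pd hPD] at h1
  exact code_le_mu hu hμ h1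

/-! ### Sums of counts as countP -/

lemma sum_count_lt (M : Multiset (ℕ × ℕ)) (j s₀ : ℕ) :
    ∑ i ∈ Finset.range j, M.count (i, s₀) = M.countP (fun p => p.1 < j ∧ p.2 = s₀) := by
  induction M using Multiset.induction_on with
  | empty => simp
  | cons a M ih =>
    rw [Multiset.countP_cons]
    simp only [Multiset.count_cons]
    rw [Finset.sum_add_distrib, ih]
    congr 1
    obtain ⟨a1, a2⟩ := a
    by_cases h2 : s₀ = a2
    · subst h2
      have h3 : (∑ i ∈ Finset.range j, if (i, s₀) = (a1, s₀) then 1 else 0)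
          = ∑ i ∈ Finset.range j, if i = a1 then 1 else 0 :=
        Finset.sum_congr rfl fun i _ => by simp
      rw [h3, Finset.sum_ite_eq' _ _ _]
      simp [Finset.mem_range]
    · rw [Finset.sum_eq_zero fun i _ => if_neg fun hc => h2 (congrArg Prod.snd hc)]
      rw [if_neg (fun hc => h2 hc.2.symm)]

lemma sum_count_Ioc (M : Multiset (ℕ × ℕ)) (j μ : ℕ) :
    ∑ s ∈ Finset.Ioc j μ, M.count (j, s) = M.countP (fun p => p.1 = j ∧ j < p.2 ∧ p.2 ≤ μ) := by
  induction M using Multiset.induction_on with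
  | empty => simp
  | cons a M ih =>
    rw [Multiset.countP_cons]
    simp only [Multiset.count_cons]
    rw [Finset.sum_add_distrib, ih]
    congr 1
    obtain ⟨a1, a2⟩ := a
    by_cases h2 : j = a1
    · subst h2
      have h3 : (∑ s ∈ Finset.Ioc j μ, if (j, s) = (j, a2) then 1 else 0)
          = ∑ s ∈ Finset.Ioc j μ, if s = a2 then 1 else 0 :=
        Finset.sum_congr rfl fun s _ => by simp
      rw [h3, Finset.sum_ite_eq' _ _ _]
      simp [Finset.mem_Ioc]
    · rw [Finset.sum_eq_zero fun s _ => if_neg fun hc => h2 (congrArg Prod.fst hc)]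
      rw [if_neg (fun hc => h2 hc.1.symm)]

lemma countP_split (M : Multiset (ℕ × ℕ)) (P Q : ℕ × ℕ → Prop)
    [DecidablePred P] [DecidablePred Q] :
    M.countP P = M.countP (fun a => P a ∧ Q a) + M.countP (fun a => P a ∧ ¬ Q a) := by
  rw [Multiset.countP_eq_countP_filter_add M P Q, Multiset.countP_filter, Multiset.countP_filter]

end PDAux
namespace PDAux

lemma setsz_empty {μ j : ℕ} (hj : μ < j) : {a : LIdx | memL μ a ∧ lidxSz a = j} = ∅ := by
  ext a
  simp only [Set.mem_setOf_eq, Set.mem_empty_iff_false, iff_false, not_and]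
  rintro ⟨-, -, hsz⟩ h
  omega

lemma setfst_empty {μ j : ℕ} (hj : μ < j) : {a : LIdx | memL μ a ∧ a.1 = j} = ∅ := by
  ext a
  simp only [Set.mem_setOf_eq, Set.mem_empty_iff_false, iff_false, not_and]
  rintro ⟨-, -, hsz⟩ h1
  have h2 : a.1 ≤ lidxSz a := Nat.le_add_right _ _
  omega

lemma finsum_sz {n : ℕ} (μ : ℕ) (D : Finset (ℕ × ℕ)) {j : ℕ} (hj : j ≤ μ) :
    ∑ᶠ a ∈ {a : LIdx | memL μ a ∧ lidxSz a = j}, ((phiMap n μ D a : ℤ))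
      = ∑ i ∈ Finset.range j, ((mOf n D).count (i, j) : ℤ) := by
  rw [finsum_mem_eq_sum_of_inter_support_eq _
    (t := (Finset.range j).image (fun i => ((i, [j - i]) : LIdx)))
    (by
      ext a
      simp only [Set.mem_inter_iff, Set.mem_setOf_eq, Function.mem_support, Finset.coe_image,
        Set.mem_image, Finset.mem_coe, Finset.mem_range, ne_eq, Int.natCast_eq_zero]
      constructor
      · rintro ⟨⟨hmem, hsz⟩, hne⟩
        obtain ⟨i, k, rfl, hk, hik⟩ := phi_shape hne
        rw [lidxSz] at hsz
        simp only [List.sum_cons, List.sum_nil, Nat.add_zero] at hsz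
        refine ⟨⟨i, by omega, ?_⟩, hne⟩
        have hkji : k = j - i := by omega
        rw [hkji]
      · rintro ⟨⟨i, hi, rfl⟩, hne⟩
        refine ⟨⟨memL_single.mpr ⟨by omega, by omega⟩, ?_⟩, hne⟩
        rw [lidxSz]
        simp only [List.sum_cons, List.sum_nil, Nat.add_zero]
        omega)]
  rw [Finset.sum_image (by
    intro x _ y _ hxy
    exact congrArg Prod.fst hxy)]
  refine Finset.sum_congr rfl fun i hi => ?_
  rw [Finset.mem_range] at hi
  have h1 : phiMap n μ D (i, [j - i]) = (mOf n D).count (i, j) := by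
    rw [phi_single, if_pos ⟨by omega, by omega⟩]
    have h2 : i + (j - i) = j := by omega
    rw [h2]
  rw [h1]

lemma finsum_fst {n : ℕ} (μ : ℕ) (D : Finset (ℕ × ℕ)) {j : ℕ} (hj : j ≤ μ) :
    ∑ᶠ a ∈ {a : LIdx | memL μ a ∧ a.1 = j}, ((phiMap n μ D a : ℤ))
      = ∑ s ∈ Finset.Ioc j μ, ((mOf n D).count (j, s) : ℤ) := by
  rw [finsum_mem_eq_sum_of_inter_support_eq _
    (t := (Finset.Ioc j μ).image (fun s => ((j, [s - j]) : LIdx)))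
    (by
      ext a
      simp only [Set.mem_inter_iff, Set.mem_setOf_eq, Function.mem_support, Finset.coe_image,
        Set.mem_image, Finset.mem_coe, Finset.mem_Ioc, ne_eq, Int.natCast_eq_zero]
      constructor
      · rintro ⟨⟨hmem, hfst⟩, hne⟩
        obtain ⟨i, k, rfl, hk, hik⟩ := phi_shape hne
        simp only at hfst
        subst hfst
        refine ⟨⟨i + k, ⟨by omega, by omega⟩, ?_⟩, hne⟩
        have hkk : i + k - i = k := by omega
        rw [hkk]
      · rintro ⟨⟨s, hs, rfl⟩, hne⟩
        exact ⟨⟨memL_single.mpr ⟨by omega, by omega⟩, rfl⟩, hne⟩)]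
  rw [Finset.sum_image (by
    intro x hx y hy hxy
    simp only [Finset.mem_coe, Finset.mem_Ioc] at hx hy
    have h1 := congrArg Prod.snd hxy
    simp only [List.cons.injEq] at h1
    omega)]
  refine Finset.sum_congr rfl fun s hs => ?_
  rw [Finset.mem_Ioc] at hs
  have h1 : phiMap n μ D (j, [s - j]) = (mOf n D).count (j, s) := by
    rw [phi_single, if_pos ⟨by omega, by omega⟩]
    have h2 : j + (s - j) = s := by omega
    rw [h2]
  rw [h1]

lemma wtu_phi {n : ℕ} {u : Equiv.Perm ℕ} {μ : ℕ} {D : Finset (ℕ × ℕ)}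
    (hPD : IsPipeDream n u D) (hu : ∀ i, n ≤ i → u i = i)
    (hμ : μ = sSup {i | 0 < lehmerCode u i}) (j : ℕ) :
    wtu u μ (phiMap n μ D) j = (wt D j : ℤ) := by
  rw [wtu]
  by_cases hj : j ≤ μ
  · rw [finsum_sz μ D hj, finsum_fst μ D hj]
    have e1 : ∑ i ∈ Finset.range j, ((mOf n D).count (i, j) : ℤ)
        = ((mOf n D).countP (fun p => p.1 < j ∧ p.2 = j) : ℤ) := by
      rw [← sum_count_lt]
      push_cast
      rfl
    have e2 : ∑ s ∈ Finset.Ioc j μ, ((mOf n D).count (j, s) : ℤ)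
        = ((mOf n D).countP (fun p => p.1 = j ∧ j < p.2 ∧ p.2 ≤ μ) : ℤ) := by
      rw [← sum_count_Ioc]
      push_cast
      rfl
    rw [e1, e2]
    have s1 := countP_split (mOf n D) (fun p => p.2 = j) (fun p => p.1 < j)
    rw [countP_snd_of_pd hPD] at s1
    have c1 : (mOf n D).countP (fun a => a.2 = j ∧ a.1 < j)
        = (mOf n D).countP (fun p => p.1 < j ∧ p.2 = j) :=
      Multiset.countP_congr rfl fun x _ => propext and_comm
    have c2 : (mOf n D).countP (fun a => a.2 = j ∧ ¬a.1 < j)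
        = (mOf n D).countP (fun a => a.1 = j ∧ a.2 = j) := by
      refine Multiset.countP_congr rfl fun x hx => propext ?_
      have hle := fst_le_snd_mOf n D x hx
      constructor
      · rintro ⟨h1, h2⟩
        exact ⟨by omega, h1⟩
      · rintro ⟨h1, h2⟩
        exact ⟨h2, by omega⟩
    rw [c1, c2] at s1
    have s2 := countP_split (mOf n D) (fun p => p.1 = j) (fun p => p.2 = j)
    rw [countP_fst_of_pd hPD] at s2
    have c3 : (mOf n D).countP (fun a => a.1 = j ∧ ¬a.2 = j)
        = (mOf n D).countP (fun p => p.1 = j ∧ j < p.2 ∧ p.2 ≤ μ) := by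
      refine Multiset.countP_congr rfl fun x hx => propext ?_
      have hle := fst_le_snd_mOf n D x hx
      have hmu := snd_le_mu_mOf hPD hu hμ x hx
      constructor
      · rintro ⟨h1, h2⟩
        exact ⟨h1, by omega, hmu⟩
      · rintro ⟨h1, h2, h3⟩
        exact ⟨h1, by omega⟩
    rw [c3] at s2
    omega
  · push_neg at hj
    rw [setsz_empty hj, setfst_empty hj, finsum_mem_empty]
    have hc : lehmerCode u j = 0 := by
      by_contra h0
      have := code_le_mu hu hμ (Nat.pos_of_ne_zero h0)
      omega
    have hw : wt D j = 0 := by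
      rw [← countP_fst_of_pd hPD, Multiset.countP_eq_zero]
      intro p hp hpj
      have h1 := fst_le_snd_mOf n D p hp
      have h2 := snd_le_mu_mOf hPD hu hμ p hp
      omega
    rw [hc, hw]
    simp

lemma phi_inj {n : ℕ} {u : Equiv.Perm ℕ} {μ : ℕ} (hu : ∀ i, n ≤ i → u i = i)
    (hμ : μ = sSup {i | 0 < lehmerCode u i}) {D E : Finset (ℕ × ℕ)}
    (hD : IsPipeDream n u D) (hE : IsPipeDream n u E)
    (h : phiMap n μ D = phiMap n μ E) : D = E := by
  have hoff : ∀ i s : ℕ, i < s → (mOf n D).count (i, s) = (mOf n E).count (i, s) := by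
    intro i s his
    by_cases hsμ : s ≤ μ
    · have h1 := congrFun h (i, [s - i])
      rw [phi_single, phi_single, if_pos ⟨by omega, by omega⟩, if_pos ⟨by omega, by omega⟩] at h1
      have hsi : i + (s - i) = s := by omega
      rw [hsi] at h1
      exact h1
    · push_neg at hsμ
      rw [Multiset.count_eq_zero_of_notMem, Multiset.count_eq_zero_of_notMem]
      · intro hmem
        have h1 := snd_le_mu_mOf hE hu hμ _ hmem
        dsimp only at h1
        omega
      · intro hmem
        have h1 := snd_le_mu_mOf hD hu hμ _ hmem
        dsimp only at h1
        omega
  have hdiag : ∀ (F : Finset (ℕ × ℕ)), IsPipeDream n u F → ∀ s : ℕ,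
      (mOf n F).countP (fun p => p.1 < s ∧ p.2 = s) + (mOf n F).count (s, s)
        = lehmerCode u s := by
    intro F hF s
    have s1 := countP_split (mOf n F) (fun p => p.2 = s) (fun p => p.1 < s)
    rw [countP_snd_of_pd hF] at s1
    have c1 : (mOf n F).countP (fun a => a.2 = s ∧ a.1 < s)
        = (mOf n F).countP (fun p => p.1 < s ∧ p.2 = s) :=
      Multiset.countP_congr rfl fun x _ => propext and_comm
    have c2 : (mOf n F).countP (fun a => a.2 = s ∧ ¬a.1 < s) = (mOf n F).count (s, s) := by
      have hb : (mOf n F).count (s, s) = (mOf n F).countP (fun x => (s, s) = x) := rfl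
      rw [hb]
      refine Multiset.countP_congr rfl fun x hx => propext ?_
      have hle := fst_le_snd_mOf n F x hx
      constructor
      · rintro ⟨h1, h2⟩
        have h3 : x.1 = s := by omega
        rw [Prod.ext_iff]
        exact ⟨h3.symm, h1.symm⟩
      · rintro h1
        rw [← h1]
        exact ⟨rfl, by omega⟩
    rw [c1, c2] at s1
    omega
  have hM : mOf n D = mOf n E := by
    apply Multiset.ext'
    rintro ⟨i, s⟩
    rcases lt_trichotomy i s with his | his | his
    · exact hoff i s his
    · subst his
      have h1 := hdiag D hD i
      have h2 := hdiag E hE i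
      have h3 : (mOf n D).countP (fun p => p.1 < i ∧ p.2 = i)
          = (mOf n E).countP (fun p => p.1 < i ∧ p.2 = i) := by
        rw [← sum_count_lt, ← sum_count_lt]
        exact Finset.sum_congr rfl fun i' hi' => hoff i' i (Finset.mem_range.mp hi')
      omega
    · rw [Multiset.count_eq_zero_of_notMem, Multiset.count_eq_zero_of_notMem]
      · intro hmem
        have h1 := fst_le_snd_mOf n E _ hmem
        dsimp only at h1
        omega
      · intro hmem
        have h1 := fst_le_snd_mOf n D _ hmem
        dsimp only at h1
        omega
  have hA := word_inj (aword n D) (aword n E) (aword_pairwise n D) (aword_pairwise n E)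
    (reduced_of_pd hD) (reduced_of_pd hE)
    (by rw [wprod_of_pd hD, wprod_of_pd hE]) hM
  apply Finset.ext
  rintro ⟨i, j⟩
  rw [← mem_aword hD.1, ← mem_aword hE.1, hA]

end PDAux

/-- There is a weight-preserving injection `φ_u : PD(u) → Φ_μ`, where
`μ = max {i : c_i(u) > 0}` (formalized 0-indexed as `μ = sSup {i | c_i(u) > 0}`,
one less than the 1-indexed maximum). -/
theorem exists_weight_preserving_injection_pipeDreams_ladderSequences
    (n : ℕ) (u : Equiv.Perm ℕ) (hu : ∀ i, n ≤ i → u i = i)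
    (μ : ℕ) (hμ : μ = sSup {i | 0 < lehmerCode u i}) :
    ∃ φ : Finset (ℕ × ℕ) → (LIdx → ℕ),
      Set.InjOn φ {D | IsPipeDream n u D} ∧
      ∀ D : Finset (ℕ × ℕ), IsPipeDream n u D →
        memPhi μ (φ D) ∧ ∀ j, wtu u μ (φ D) j = (wt D j : ℤ) := by
  refine ⟨PDAux.phiMap n μ, ?_, ?_⟩
  · intro D hD E hE hDE
    exact PDAux.phi_inj hu hμ hD hE hDE
  · intro D hD
    exact ⟨PDAux.phi_memPhi n μ D, fun j => PDAux.wtu_phi hD hu hμ j⟩
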